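/- Let $H_1 \xrightarrow{T} H_2 \xrightarrow{S} H_3$ be densely defined closed linear operators between Hilbert spaces with $S \circ T = 0$ on the domain of $T$ (i.e. $\mathrm{ran}(T) \subseteq \ker S$). Let $V \subseteq H_2$ be a closed subspace containing $\mathrm{ran}(T)$. Suppose there is a constant $C > 0$ such that $\|h\|_{H_2} \le C(\|T^*h\|_{H_1} + \|Sh\|_{H_3})$ for all $h \in D_{T^*} \cap D_S \cap V$. Then for every $v \in \ker S \cap V$ there exists $w \in D_T$ with $Tw = v$ and $\|w\|_{H_1} \le C\|v\|_{H_2}$. -/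

import Mathlib

open scoped InnerProductSpace

local notation "⟪" x ", " y "⟫" => @inner ℂ _ _ x y

/-- Pointwise version of `T** = T` for a closed densely defined operator: if
`⟪w, T†h⟫ = ⟪v, h⟫` for all `h` in the domain of the adjoint, then `(w, v)` lies in the
graph of `T`. -/
lemma hormander_aux {H1 H2 : Type*}
    [NormedAddCommGroup H1] [InnerProductSpace ℂ H1] [CompleteSpace H1]
    [NormedAddCommGroup H2] [InnerProductSpace ℂ H2] [CompleteSpace H2]
    (T : H1 →ₗ.[ℂ] H2) (hTdense : Dense (T.domain : Set H1)) (hTclosed : T.IsClosed)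
    (w : H1) (v : H2)
    (hw : ∀ h : T.adjoint.domain, ⟪w, T.adjoint h⟫ = ⟪v, (h : H2)⟫) :
    (w, v) ∈ T.graph := by
  set e := WithLp.prodContinuousLinearEquiv 2 ℂ H1 H2 with he
  set G : Submodule ℂ (WithLp 2 (H1 × H2)) :=
    T.graph.comap (e.toLinearEquiv : WithLp 2 (H1 × H2) →ₗ[ℂ] H1 × H2) with hGdef
  have hG : IsClosed (G : Set (WithLp 2 (H1 × H2))) := by
    have : (G : Set (WithLp 2 (H1 × H2))) = e ⁻¹' (T.graph : Set (H1 × H2)) := rfl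
    rw [this]
    exact hTclosed.preimage e.continuous
  haveI : CompleteSpace G := hG.completeSpace_coe
  have hGperp : ∀ z : WithLp 2 (H1 × H2), z ∈ Gᗮ →
      ∃ hz : z.snd ∈ T.adjoint.domain, T.adjoint ⟨z.snd, hz⟩ = -z.fst := by
    intro z hz
    rw [Submodule.mem_orthogonal] at hz
    have key : ∀ x : T.domain, ⟪-z.fst, (x : H1)⟫ = ⟪z.snd, T x⟫ := by
      intro x
      have hmem : (WithLp.equiv 2 (H1 × H2)).symm ((x : H1), T x) ∈ G := by
        show ((x : H1), T x) ∈ T.graph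
        exact T.mem_graph x
      have h0 := hz _ hmem
      rw [WithLp.prod_inner_apply] at h0
      have h0' := congrArg (starRingEnd ℂ) h0
      simp only [map_add, inner_conj_symm, map_zero] at h0'
      simp only [WithLp.equiv_symm_apply, WithLp.ofLp_toLp] at h0'
      change ⟪z.fst, (x : H1)⟫ + ⟪z.snd, T x⟫ = 0 at h0'
      rw [inner_neg_left]
      linear_combination -h0'
    exact ⟨T.mem_adjoint_domain_of_exists _ ⟨-z.fst, key⟩,
      T.adjoint_apply_eq hTdense _ key⟩
  have hmemGoo : (WithLp.equiv 2 (H1 × H2)).symm (w, v) ∈ Gᗮᗮ := by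
    rw [Submodule.mem_orthogonal]
    intro z hz
    obtain ⟨hz2, hz3⟩ := hGperp z hz
    have hw' := congrArg (starRingEnd ℂ) (hw ⟨z.snd, hz2⟩)
    simp only [inner_conj_symm] at hw'
    rw [WithLp.prod_inner_apply]
    have hfst : z.fst = -(T.adjoint ⟨z.snd, hz2⟩) := by rw [hz3, neg_neg]
    show ⟪z.fst, w⟫ + ⟪z.snd, v⟫ = 0
    rw [hfst, inner_neg_left, hw']
    ring
  rw [Submodule.orthogonal_orthogonal] at hmemGoo
  exact hmemGoo

/-- Hörmander: Let `T : H₁ → H₂`, `S : H₂ → H₃` be densely defined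
closed operators between Hilbert spaces with `ran T ⊆ ker S`, let `V ⊆ H₂` be a
closed subspace containing `ran T`, and suppose
`‖h‖ ≤ C(‖T*h‖ + ‖Sh‖)` for all `h ∈ D_{T*} ∩ D_S ∩ V`. Then for every
`v ∈ ker S ∩ V` there is `w ∈ D_T` with `Tw = v` and `‖w‖ ≤ C‖v‖`. -/
theorem stmt_13 {H1 H2 H3 : Type*}
    [NormedAddCommGroup H1] [InnerProductSpace ℂ H1] [CompleteSpace H1]
    [NormedAddCommGroup H2] [InnerProductSpace ℂ H2] [CompleteSpace H2]
    [NormedAddCommGroup H3] [InnerProductSpace ℂ H3] [CompleteSpace H3]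
    (T : H1 →ₗ.[ℂ] H2) (S : H2 →ₗ.[ℂ] H3)
    (hTdense : Dense (T.domain : Set H1)) (hSdense : Dense (S.domain : Set H2))
    (hTclosed : T.IsClosed) (hSclosed : S.IsClosed)
    (hST : ∀ x : T.domain, ∃ h : T x ∈ S.domain, S ⟨T x, h⟩ = 0)
    (V : Submodule ℂ H2) (hVclosed : IsClosed (V : Set H2))
    (hTV : ∀ x : T.domain, T x ∈ V)
    (C : ℝ) (hC : 0 < C)
    (est : ∀ h : H2, ∀ (h1 : h ∈ T.adjoint.domain) (h2 : h ∈ S.domain), h ∈ V →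
      ‖h‖ ≤ C * (‖T.adjoint ⟨h, h1⟩‖ + ‖S ⟨h, h2⟩‖)) :
    ∀ v : H2, ∀ hv : v ∈ S.domain, S ⟨v, hv⟩ = 0 → v ∈ V →
      ∃ w : H1, ∃ hw : w ∈ T.domain, T ⟨w, hw⟩ = v ∧ ‖w‖ ≤ C * ‖v‖ := by
  intro v hv hSv hVv
  -- the closed subspace `W = V ⊓ ker S`
  set kerS : Submodule ℂ H2 := S.graph.comap (LinearMap.inl ℂ H2 H3) with hkerS
  have hkerS_mem : ∀ x : H2, x ∈ kerS ↔ ∃ hx : x ∈ S.domain, S ⟨x, hx⟩ = 0 := by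
    intro x
    constructor
    · intro h
      rw [Submodule.mem_comap, LinearPMap.mem_graph_iff] at h
      obtain ⟨y, hy1, hy2⟩ := h
      simp only [LinearMap.inl_apply] at hy1 hy2
      refine ⟨hy1 ▸ y.2, ?_⟩
      have : (⟨x, hy1 ▸ y.2⟩ : S.domain) = y := Subtype.ext hy1.symm
      rw [this, hy2]
    · rintro ⟨hx, hx0⟩
      rw [Submodule.mem_comap, LinearPMap.mem_graph_iff]
      exact ⟨⟨x, hx⟩, rfl, hx0⟩
  set W : Submodule ℂ H2 := V ⊓ kerS with hW
  have hWclosed : IsClosed (W : Set H2) := by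
    have h1 : IsClosed (kerS : Set H2) := by
      have : (kerS : Set H2) = (fun x : H2 => ((x, 0) : H2 × H3)) ⁻¹' (S.graph : Set (H2 × H3)) :=
        rfl
      rw [this]
      exact hSclosed.preimage ((ContinuousLinearMap.inl ℂ H2 H3).continuous)
    have : (W : Set H2) = (V : Set H2) ∩ (kerS : Set H2) := rfl
    rw [this]
    exact hVclosed.inter h1
  haveI : CompleteSpace W := hWclosed.completeSpace_coe
  have hvW : v ∈ W := ⟨hVv, (hkerS_mem v).mpr ⟨hv, hSv⟩⟩
  have hranW : ∀ x : T.domain, T x ∈ W := by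
    intro x
    obtain ⟨h1, h2⟩ := hST x
    exact ⟨hTV x, (hkerS_mem _).mpr ⟨h1, h2⟩⟩
  -- Key estimate: |⟪v, h⟫| ≤ C‖v‖‖T†h‖ for all h ∈ dom T†
  have key : ∀ h : H2, ∀ hh : h ∈ T.adjoint.domain,
      ‖⟪v, h⟫‖ ≤ C * ‖v‖ * ‖T.adjoint ⟨h, hh⟩‖ := by
    intro h hh
    set p : H2 := (W.orthogonalProjection h : H2) with hp
    set q : H2 := h - p with hq
    have hqperp : q ∈ Wᗮ := W.sub_starProjection_mem_orthogonal h
    rw [Submodule.mem_orthogonal] at hqperp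
    have keyq : ∀ x : T.domain, ⟪(0 : H1), (x : H1)⟫ = ⟪q, T x⟫ := by
      intro x
      have h0 : ⟪T x, q⟫ = 0 := hqperp _ (hranW x)
      have h0' := congrArg (starRingEnd ℂ) h0
      simp only [inner_conj_symm, map_zero] at h0'
      rw [inner_zero_left, h0']
    have hqdom : q ∈ T.adjoint.domain := T.mem_adjoint_domain_of_exists _ ⟨0, keyq⟩
    have hq0 : T.adjoint ⟨q, hqdom⟩ = 0 := T.adjoint_apply_eq hTdense _ keyq
    have hpdom : p ∈ T.adjoint.domain := by
      have := sub_mem hh hqdom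
      simpa [hq] using this
    have hTp : T.adjoint ⟨p, hpdom⟩ = T.adjoint ⟨h, hh⟩ := by
      have hsub : (⟨p, hpdom⟩ : T.adjoint.domain) = ⟨h, hh⟩ - ⟨q, hqdom⟩ := by
        apply Subtype.ext
        simp [hq]
      rw [hsub, LinearPMap.map_sub, hq0, sub_zero]
    have hpW : p ∈ W := (W.orthogonalProjection h).2
    obtain ⟨hpV, hpk⟩ := hpW
    obtain ⟨hpS, hpS0⟩ := (hkerS_mem p).mp hpk
    have hest : ‖p‖ ≤ C * ‖T.adjoint ⟨h, hh⟩‖ := by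
      have := est p hpdom hpS hpV
      rwa [hpS0, norm_zero, add_zero, hTp] at this
    have hvq : ⟪v, q⟫ = 0 := hqperp _ hvW
    have hsplit : ⟪v, h⟫ = ⟪v, p⟫ := by
      have : h = p + q := by rw [hq]; abel
      rw [this, inner_add_right, hvq, add_zero]
    rw [hsplit]
    calc ‖⟪v, p⟫‖ ≤ ‖v‖ * ‖p‖ := norm_inner_le_norm v p
      _ ≤ ‖v‖ * (C * ‖T.adjoint ⟨h, hh⟩‖) := by
          gcongr
      _ = C * ‖v‖ * ‖T.adjoint ⟨h, hh⟩‖ := by ring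
  -- Construct the bounded functional on the range of T†
  set A : T.adjoint.domain →ₗ[ℂ] H1 := T.adjoint.toFun with hA
  set ψ : T.adjoint.domain →ₗ[ℂ] ℂ := (innerₛₗ ℂ v).comp T.adjoint.domain.subtype with hψ
  have hψ_apply : ∀ h : T.adjoint.domain, ψ h = ⟪v, (h : H2)⟫ := fun h => rfl
  have hA_apply : ∀ h : T.adjoint.domain, A h = T.adjoint h := fun h => rfl
  have key' : ∀ h : T.adjoint.domain, ‖ψ h‖ ≤ C * ‖v‖ * ‖A h‖ := by
    intro h
    have := key (h : H2) h.2
    simpa [hψ_apply, hA_apply] using this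
  have hker : LinearMap.ker A ≤ LinearMap.ker ψ := by
    intro h hh
    rw [LinearMap.mem_ker] at hh ⊢
    have := key' h
    rw [hh, norm_zero, mul_zero] at this
    exact norm_le_zero_iff.mp this
  set f₁ : (T.adjoint.domain ⧸ LinearMap.ker A) →ₗ[ℂ] ℂ :=
    (LinearMap.ker A).liftQ ψ hker with hf₁
  set eqv := LinearMap.quotKerEquivRange A with heqv
  set f₀ : LinearMap.range A →ₗ[ℂ] ℂ := f₁.comp eqv.symm.toLinearMap with hf₀
  have happ : ∀ h : T.adjoint.domain, ∀ hm : A h ∈ LinearMap.range A,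
      f₀ ⟨A h, hm⟩ = ψ h := by
    intro h hm
    have h1 : (⟨A h, hm⟩ : LinearMap.range A) = eqv (Submodule.Quotient.mk h) := by
      apply Subtype.ext
      rw [heqv, LinearMap.quotKerEquivRange_apply_mk]
    rw [hf₀, LinearMap.comp_apply, h1]
    simp only [LinearEquiv.coe_toLinearMap, LinearEquiv.symm_apply_apply]
    rw [hf₁, Submodule.liftQ_apply]
  have hbound : ∀ x : LinearMap.range A, ‖f₀ x‖ ≤ (C * ‖v‖) * ‖x‖ := by
    rintro ⟨x, hx⟩
    obtain ⟨h, rfl⟩ := hx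
    rw [happ h (LinearMap.mem_range_self A h)]
    exact key' h
  set F : LinearMap.range A →L[ℂ] ℂ := LinearMap.mkContinuous f₀ (C * ‖v‖) hbound with hF
  obtain ⟨g, hg, hgnorm⟩ := exists_extension_norm_eq (LinearMap.range A) F
  set w : H1 := (InnerProductSpace.toDual ℂ H1).symm g with hwdef
  have hwnorm : ‖w‖ ≤ C * ‖v‖ := by
    rw [hwdef, LinearIsometryEquiv.norm_map, hgnorm]
    exact LinearMap.mkContinuous_norm_le f₀ (by positivity) hbound
  have hwprop : ∀ h : T.adjoint.domain, ⟪w, T.adjoint h⟫ = ⟪v, (h : H2)⟫ := by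
    intro h
    have h1 : ⟪w, T.adjoint h⟫ = g (T.adjoint h) := InnerProductSpace.toDual_symm_apply
    rw [h1, ← hA_apply]
    have h2 : A h = ((⟨A h, LinearMap.mem_range_self A h⟩ : LinearMap.range A) : H1) := rfl
    rw [h2, hg, hF]
    rw [LinearMap.mkContinuous_apply, happ h (LinearMap.mem_range_self A h), hψ_apply]
  have hgraph : (w, v) ∈ T.graph := hormander_aux T hTdense hTclosed w v hwprop
  rw [LinearPMap.mem_graph_iff] at hgraph
  obtain ⟨y, hy1, hy2⟩ := hgraph
  have hy1' : (y : H1) = w := hy1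
  have hy2' : T y = v := hy2
  refine ⟨w, hy1' ▸ y.2, ?_, hwnorm⟩
  have : (⟨w, hy1' ▸ y.2⟩ : T.domain) = y := Subtype.ext hy1'.symm
  rw [this, hy2']
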